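/- Let 0 < λ < 1 and 0 < q ≤ 1. For every integer u ≥ 1, F_{q,−λ}(u−1) − F_{q,−λ}(u) = −Σ_{m=1}^∞ ĥ_{qm−1}(u)·(−λ)^m, where the series on the right converges. (This is the probability mass function of the discrete Mittag-Leffler waiting time.) -/

import Mathlib

/-- Generalized binomial coefficient `ĥ_α(x) = Γ(x+α)/(Γ(α+1)·Γ(x))`. -/
noncomputable def hhat (α x : ℝ) : ℝ :=
  Real.Gamma (x + α) / (Real.Gamma (α + 1) * Real.Gamma x)

/-- Discrete Mittag-Leffler function `F_{q,λ}(t) = Σ_m ĥ_{qm}(t)·λ^m`, with `F_{q,λ}(0) = 1`. -/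
noncomputable def dML (q lam : ℝ) (t : ℕ) : ℝ :=
  if t = 0 then 1 else ∑' m : ℕ, hhat (q * m) (t : ℝ) * lam ^ m

lemma gamma_add_nat (β : ℝ) (hβ : 0 < β) (n : ℕ) :
    Real.Gamma (β + n) = Real.Gamma β * ∏ j ∈ Finset.range n, (β + j) := by
  induction n with
  | zero => simp
  | succ n ih =>
    have h1 : β + ((n+1 : ℕ) : ℝ) = (β + n) + 1 := by push_cast; ring
    have h2 : β + (n:ℝ) ≠ 0 := by positivity
    rw [h1, Real.Gamma_add_one h2, ih, Finset.prod_range_succ]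
    ring

lemma hhat_eq_prod (α : ℝ) (hα : 0 < α + 1) (u : ℕ) (hu : 1 ≤ u) :
    hhat α u = (∏ j ∈ Finset.range (u-1), (α + 1 + j)) / Real.Gamma u := by
  have hc : ((u-1:ℕ):ℝ) = (u:ℝ) - 1 := by
    have := Nat.cast_sub hu (R := ℝ); simpa using this
  have h1 : (u:ℝ) + α = (α+1) + ((u-1 : ℕ) : ℝ) := by rw [hc]; ring
  have hΓ : Real.Gamma (α+1) ≠ 0 := ne_of_gt (Real.Gamma_pos_of_pos hα)
  rw [hhat, h1, gamma_add_nat _ hα, mul_div_mul_left _ _ hΓ]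

lemma hhat_nonneg (α : ℝ) (hα : 0 < α + 1) (u : ℕ) (hu : 1 ≤ u) : 0 ≤ hhat α u := by
  rw [hhat_eq_prod α hα u hu]
  have hΓ : 0 < Real.Gamma u := Real.Gamma_pos_of_pos (by exact_mod_cast hu)
  apply div_nonneg _ hΓ.le
  apply Finset.prod_nonneg
  intro j hj
  positivity

lemma hhat_le (α : ℝ) (hα : 0 < α + 1) (u : ℕ) (hu : 1 ≤ u) (M : ℝ) (hM : α + 1 ≤ M) :
    hhat α u ≤ (M + u) ^ (u-1) / Real.Gamma u := by
  rw [hhat_eq_prod α hα u hu]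
  have hΓ : 0 < Real.Gamma u := Real.Gamma_pos_of_pos (by exact_mod_cast hu)
  gcongr
  calc (∏ j ∈ Finset.range (u-1), (α + 1 + j))
      ≤ ∏ _j ∈ Finset.range (u-1), (M + u) := by
        apply Finset.prod_le_prod
        · intro j hj; positivity
        · intro j hj
          have hju : (j:ℝ) ≤ (u:ℝ) := by
            exact_mod_cast (le_of_lt (lt_of_lt_of_le (Finset.mem_range.1 hj) (Nat.sub_le u 1)))
          linarith
    _ = (M + u) ^ (u-1) := by rw [Finset.prod_const, Finset.card_range]

lemma summable_poly_geom (lam : ℝ) (h0 : 0 < lam) (h1 : lam < 1) (k c : ℕ) :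
    Summable (fun m : ℕ => ((m:ℝ) + c) ^ k * lam ^ m) := by
  have hr : ‖lam‖ < 1 := by rw [Real.norm_eq_abs, abs_of_pos h0]; exact h1
  have h := summable_pow_mul_geometric_of_norm_lt_one k hr
  have h2 := (summable_nat_add_iff c).2 h
  have h3 := h2.mul_right ((lam ^ c)⁻¹)
  apply h3.congr
  intro m
  have hlc : (lam:ℝ) ^ c ≠ 0 := by positivity
  push_cast
  rw [pow_add]
  field_simp

lemma summable_hhat (lam : ℝ) (h0 : 0 < lam) (h1 : lam < 1) (u : ℕ) (hu : 1 ≤ u)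
    (α : ℕ → ℝ) (hα0 : ∀ m, 0 < α m + 1) (hα1 : ∀ m, α m + 1 ≤ m + 1)
    (ε : ℕ → ℝ) (hε : ∀ m, |ε m| ≤ lam ^ m) :
    Summable (fun m => hhat (α m) (u : ℝ) * ε m) := by
  have hΓ : 0 < Real.Gamma u := Real.Gamma_pos_of_pos (by exact_mod_cast hu)
  have hg : Summable (fun m : ℕ => ((m:ℝ) + (u+1 : ℕ)) ^ (u-1) * lam ^ m * (Real.Gamma u)⁻¹) :=
    (summable_poly_geom lam h0 h1 (u-1) (u+1)).mul_right _
  apply Summable.of_norm_bounded hg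
  intro m
  have hnn := hhat_nonneg _ (hα0 m) u hu
  have hub := hhat_le _ (hα0 m) u hu ((m:ℝ)+1) (hα1 m)
  rw [Real.norm_eq_abs, abs_mul, abs_of_nonneg hnn]
  calc hhat (α m) u * |ε m|
      ≤ (((m:ℝ)+1) + u)^(u-1) / Real.Gamma u * lam ^ m := by
        apply mul_le_mul hub (hε m) (abs_nonneg _)
        positivity
    _ = ((m:ℝ) + (u+1:ℕ)) ^ (u-1) * lam ^ m * (Real.Gamma u)⁻¹ := by push_cast; ring

lemma hhat_diff (α x : ℝ) (hα : 0 < α) (hx : 2 ≤ x) :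
    hhat α (x - 1) - hhat α x = -(hhat (α - 1) x) := by
  have hx1 : (0:ℝ) < x - 1 := by linarith
  have hΓx1 : 0 < Real.Gamma (x-1) := Real.Gamma_pos_of_pos hx1
  have hΓα : 0 < Real.Gamma α := Real.Gamma_pos_of_pos hα
  have e1 : Real.Gamma x = (x-1) * Real.Gamma (x-1) := by
    have := Real.Gamma_add_one (ne_of_gt hx1)
    rw [sub_add_cancel] at this
    exact this
  have e2 : Real.Gamma (x + α) = (x - 1 + α) * Real.Gamma (x - 1 + α) := by
    have h : x - 1 + α ≠ 0 := by positivity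
    have := Real.Gamma_add_one h
    rw [show x - 1 + α + 1 = x + α by ring] at this
    exact this
  have e3 : Real.Gamma (α + 1) = α * Real.Gamma α := Real.Gamma_add_one (ne_of_gt hα)
  have e4 : x + (α - 1) = x - 1 + α := by ring
  have e5 : α - 1 + 1 = α := by ring
  simp only [hhat]
  rw [e4, e5, e2, e3, e1]
  have hne1 : x - 1 ≠ 0 := ne_of_gt hx1
  have hne2 : Real.Gamma (x-1) ≠ 0 := ne_of_gt hΓx1
  have hne3 : Real.Gamma α ≠ 0 := ne_of_gt hΓα
  have hne4 : α ≠ 0 := ne_of_gt hα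
  field_simp
  ring

lemma hhat_one (α : ℝ) (hα : 0 < α + 1) : hhat α 1 = 1 := by
  rw [hhat, show (1:ℝ) + α = α + 1 by ring, Real.Gamma_one, mul_one,
    div_self (ne_of_gt (Real.Gamma_pos_of_pos hα))]

lemma hhat_zero (x : ℝ) (hx : Real.Gamma x ≠ 0) : hhat 0 x = 1 := by
  rw [hhat, add_zero, zero_add, Real.Gamma_one, one_mul, div_self hx]

lemma hhat_neg_one (x : ℝ) : hhat (-1) x = 0 := by
  rw [hhat, neg_add_cancel, Real.Gamma_zero, zero_mul, div_zero]


/-- Probability mass function of the discrete Mittag-Leffler waiting time: for `u ≥ 1`,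
`F_{q,−λ}(u−1) − F_{q,−λ}(u) = −Σ_{m=1}^∞ ĥ_{qm−1}(u)·(−λ)^m`, where the series converges. -/
theorem pmf_waiting_time (lam q : ℝ) (hlam0 : 0 < lam) (hlam1 : lam < 1)
    (hq0 : 0 < q) (hq1 : q ≤ 1) (u : ℕ) (hu : 1 ≤ u) :
    Summable (fun m : ℕ => hhat (q * ((m : ℝ) + 1) - 1) (u : ℝ) * (-lam) ^ (m + 1)) ∧
    dML q (-lam) (u - 1) - dML q (-lam) u =
      -∑' m : ℕ, hhat (q * ((m : ℝ) + 1) - 1) (u : ℝ) * (-lam) ^ (m + 1) := by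
  have hε : ∀ m : ℕ, |(-lam) ^ (m + 1)| ≤ lam ^ m := by
    intro m
    rw [abs_pow, abs_neg, abs_of_pos hlam0, pow_succ]
    exact mul_le_of_le_one_right (by positivity) hlam1.le
  have hε0 : ∀ m : ℕ, |(-lam) ^ m| ≤ lam ^ m := by
    intro m
    rw [abs_pow, abs_neg, abs_of_pos hlam0]
  have hα1pos : ∀ m : ℕ, (0:ℝ) < (q * ((m:ℝ)+1) - 1) + 1 := by
    intro m
    have : (0:ℝ) < (m:ℝ) + 1 := by positivity
    nlinarith
  have hα1le : ∀ m : ℕ, (q * ((m:ℝ)+1) - 1) + 1 ≤ (m:ℝ) + 1 := by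
    intro m
    have h : q * ((m:ℝ)+1) ≤ 1 * ((m:ℝ)+1) :=
      mul_le_mul_of_nonneg_right hq1 (by positivity)
    linarith
  -- summability of the RHS series
  have hS : Summable (fun m : ℕ => hhat (q * ((m : ℝ) + 1) - 1) (u : ℝ) * (-lam) ^ (m + 1)) := by
    apply summable_hhat lam hlam0 hlam1 u hu _ hα1pos hα1le _ hε
  refine ⟨hS, ?_⟩
  -- summability for dML u
  have hα0pos : ∀ m : ℕ, (0:ℝ) < q * (m:ℝ) + 1 := by
    intro m
    have : (0:ℝ) ≤ (m:ℝ) := Nat.cast_nonneg m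
    nlinarith
  have hα0le : ∀ m : ℕ, q * (m:ℝ) + 1 ≤ (m:ℝ) + 1 := by
    intro m
    have : (0:ℝ) ≤ (m:ℝ) := Nat.cast_nonneg m
    nlinarith
  have h1 : Summable (fun m : ℕ => hhat (q * (m:ℝ)) (u : ℝ) * (-lam) ^ m) :=
    summable_hhat lam hlam0 hlam1 u hu _ hα0pos hα0le _ hε0
  rcases eq_or_lt_of_le hu with hu1 | hu2
  · -- u = 1
    have hu1' : u = 1 := hu1.symm
    subst hu1'
    have hgeo : ‖(-lam : ℝ)‖ < 1 := by
      rw [Real.norm_eq_abs, abs_neg, abs_of_pos hlam0]; exact hlam1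
    have hgs : ∑' m : ℕ, (-lam) ^ m = (1 - (-lam))⁻¹ := tsum_geometric_of_norm_lt_one hgeo
    have hd0 : dML q (-lam) 0 = 1 := by rw [dML, if_pos rfl]
    have hd1 : dML q (-lam) 1 = (1 - (-lam))⁻¹ := by
      rw [dML, if_neg one_ne_zero, ← hgs]
      apply tsum_congr
      intro m
      rw [Nat.cast_one, hhat_one _ (hα0pos m), one_mul]
    have hrhs : ∑' m : ℕ, hhat (q * ((m : ℝ) + 1) - 1) ((1:ℕ) : ℝ) * (-lam) ^ (m + 1)
        = (-lam) * (1 - (-lam))⁻¹ := by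
      rw [← hgs, ← tsum_mul_left]
      apply tsum_congr
      intro m
      rw [Nat.cast_one, hhat_one _ (hα1pos m), one_mul, pow_succ]
      ring
    rw [show (1:ℕ) - 1 = 0 from rfl, hd0, hd1, hrhs]
    have hne : (1:ℝ) + lam ≠ 0 := by positivity
    field_simp
    rw [sub_neg_eq_add, one_sub_div hne]
    ring
  · -- u ≥ 2
    have hu2' : 2 ≤ u := hu2
    have hx : (2:ℝ) ≤ (u:ℝ) := by exact_mod_cast hu2'
    have hcast : ((u-1:ℕ):ℝ) = (u:ℝ) - 1 := by
      have := Nat.cast_sub hu (R := ℝ); simpa using this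
    have h2 : Summable (fun m : ℕ => hhat (q * (m:ℝ)) ((u:ℝ) - 1) * (-lam) ^ m) := by
      have := summable_hhat lam hlam0 hlam1 (u-1) (by omega) _ hα0pos hα0le _ hε0
      rw [hcast] at this
      exact this
    -- f3 and its summability via shift
    set f3 : ℕ → ℝ := fun m => hhat (q * (m:ℝ) - 1) (u : ℝ) * (-lam) ^ m with hf3
    have h3shift : Summable (fun m : ℕ => f3 (m + 1)) := by
      apply hS.congr
      intro m
      simp only [hf3]
      push_cast
      ring_nf
    have h3 : Summable f3 := (summable_nat_add_iff 1).1 h3shift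
    have hd1 : dML q (-lam) (u-1) = ∑' m : ℕ, hhat (q * (m:ℝ)) ((u:ℝ) - 1) * (-lam) ^ m := by
      rw [dML, if_neg (by omega)]
      rw [hcast]
    have hd2 : dML q (-lam) u = ∑' m : ℕ, hhat (q * (m:ℝ)) ((u:ℝ)) * (-lam) ^ m := by
      rw [dML, if_neg (by omega)]
    rw [hd1, hd2, ← Summable.tsum_sub h2 h1]
    have key : ∀ m : ℕ, hhat (q * (m:ℝ)) ((u:ℝ) - 1) * (-lam) ^ m
        - hhat (q * (m:ℝ)) ((u:ℝ)) * (-lam) ^ m = -(f3 m) := by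
      intro m
      simp only [hf3]
      cases m with
      | zero =>
        simp only [Nat.cast_zero, mul_zero, pow_zero, mul_one]
        have hΓu1 : Real.Gamma ((u:ℝ) - 1) ≠ 0 :=
          ne_of_gt (Real.Gamma_pos_of_pos (by linarith))
        have hΓu : Real.Gamma ((u:ℝ)) ≠ 0 :=
          ne_of_gt (Real.Gamma_pos_of_pos (by linarith))
        rw [hhat_zero _ hΓu1, hhat_zero _ hΓu, show (0:ℝ) - 1 = -1 by ring, hhat_neg_one]
        ring
      | succ n =>
        have hαpos : (0:ℝ) < q * ((n+1:ℕ):ℝ) := by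
          have : (0:ℝ) < ((n+1:ℕ):ℝ) := by positivity
          positivity
        have := hhat_diff (q * ((n+1:ℕ):ℝ)) (u:ℝ) hαpos hx
        calc hhat (q * ((n+1:ℕ):ℝ)) ((u:ℝ) - 1) * (-lam) ^ (n+1)
            - hhat (q * ((n+1:ℕ):ℝ)) ((u:ℝ)) * (-lam) ^ (n+1)
            = (hhat (q * ((n+1:ℕ):ℝ)) ((u:ℝ) - 1)
              - hhat (q * ((n+1:ℕ):ℝ)) ((u:ℝ))) * (-lam) ^ (n+1) := by ring
          _ = -(hhat (q * ((n+1:ℕ):ℝ) - 1) ((u:ℝ)) * (-lam) ^ (n+1)) := by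
              rw [this]; ring
    rw [tsum_congr key, tsum_neg, Summable.tsum_eq_zero_add h3]
    have hf30 : f3 0 = 0 := by
      simp only [hf3, Nat.cast_zero, mul_zero, pow_zero, mul_one, zero_sub]
      rw [hhat_neg_one]
    rw [hf30, zero_add]
    congr 1
    apply tsum_congr
    intro m
    simp only [hf3]
    push_cast
    ring_nf
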